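/- Uhlmann's theorem (rotated form): let ρ, σ be density operators on a finite-dimensional Hilbert space H_A and let ψ_ρ, ψ_σ ∈ H_A ⊗ H_R be any fixed purifications of ρ and σ respectively (with H_R ≅ H_A). Then the fidelity satisfies f(ρ,σ) = max over unitaries U on H_R of |⟨ψ_ρ, (1_A ⊗ U) ψ_σ⟩|. -/

import Mathlib

open scoped Kronecker Matrix.Norms.L2Operator ComplexOrder
open Matrix Classical

namespace QI

/-- Total matrix square root: the positive square root for positive semidefinite
matrices, junk value `0` otherwise. -/
noncomputable def msqrt {n : Type*} [Fintype n] [DecidableEq n] (A : Matrix n n ℂ) :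
    Matrix n n ℂ :=
  if h : A.PosSemidef then
    (h.1.eigenvectorUnitary : Matrix n n ℂ) * diagonal ((↑) ∘ Real.sqrt ∘ h.1.eigenvalues)
      * (star h.1.eigenvectorUnitary : Matrix n n ℂ) else 0

/-- Trace norm `‖X‖₁ = tr √(Xᴴ X)`. -/
noncomputable def traceNorm {n : Type*} [Fintype n] [DecidableEq n] (X : Matrix n n ℂ) : ℝ :=
  (msqrt (Xᴴ * X)).trace.re

/-- Fidelity `f(ρ,σ) = tr √(√ρ σ √ρ)`. -/
noncomputable def fid {n : Type*} [Fintype n] [DecidableEq n] (ρ σ : Matrix n n ℂ) : ℝ :=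
  (msqrt (msqrt ρ * σ * msqrt ρ)).trace.re

/-- Amplification `id_k ⊗ Φ` of a map between matrix algebras. -/
noncomputable def amp {nB nA : ℕ} (k : ℕ)
    (Φ : Matrix (Fin nB) (Fin nB) ℂ →ₗ[ℂ] Matrix (Fin nA) (Fin nA) ℂ) :
    Matrix (Fin k × Fin nB) (Fin k × Fin nB) ℂ →ₗ[ℂ]
      Matrix (Fin k × Fin nA) (Fin k × Fin nA) ℂ where
  toFun X := Matrix.of fun p q => Φ (Matrix.of fun a b => X (p.1, a) (q.1, b)) p.2 q.2
  map_add' X Y := by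
    ext p q
    have h : (Matrix.of fun a b => (X + Y) (p.1, a) (q.1, b))
        = (Matrix.of fun a b => X (p.1, a) (q.1, b))
          + Matrix.of fun a b => Y (p.1, a) (q.1, b) := by
      ext a b; simp
    show Φ (Matrix.of fun a b => (X + Y) (p.1, a) (q.1, b)) p.2 q.2
      = Φ (Matrix.of fun a b => X (p.1, a) (q.1, b)) p.2 q.2
        + Φ (Matrix.of fun a b => Y (p.1, a) (q.1, b)) p.2 q.2
    rw [h, map_add]; rfl
  map_smul' c X := by
    ext p q
    have h : (Matrix.of fun a b => (c • X) (p.1, a) (q.1, b))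
        = c • Matrix.of fun a b => X (p.1, a) (q.1, b) := by
      ext a b; simp
    show Φ (Matrix.of fun a b => (c • X) (p.1, a) (q.1, b)) p.2 q.2
      = (c • Φ (Matrix.of fun a b => X (p.1, a) (q.1, b))) p.2 q.2
    rw [h, _root_.map_smul]

/-- Operator norm of a linear map between matrix spaces, each equipped with the
ℓ²-operator norm. -/
noncomputable def opNorm {m n : Type*} [Fintype m] [Fintype n] [DecidableEq m] [DecidableEq n]
    (Φ : Matrix m m ℂ →ₗ[ℂ] Matrix n n ℂ) : ℝ :=
  ‖LinearMap.toContinuousLinearMap Φ‖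

/-- The norm of complete boundedness `‖Φ‖_cb = sup_k ‖id_k ⊗ Φ‖`. -/
noncomputable def cbNorm {nB nA : ℕ}
    (Φ : Matrix (Fin nB) (Fin nB) ℂ →ₗ[ℂ] Matrix (Fin nA) (Fin nA) ℂ) : ℝ :=
  ⨆ k : ℕ, opNorm (amp k Φ)

/-- Complete positivity. -/
def IsCP {nB nA : ℕ}
    (Φ : Matrix (Fin nB) (Fin nB) ℂ →ₗ[ℂ] Matrix (Fin nA) (Fin nA) ℂ) : Prop :=
  ∀ (k : ℕ) (X : Matrix (Fin k × Fin nB) (Fin k × Fin nB) ℂ),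
    X.PosSemidef → (amp k Φ X).PosSemidef

/-- The (Heisenberg picture) channel `T(b) = Vᴴ (b ⊗ 1_E) V` defined by a Stinespring
operator `V : H_A → H_B ⊗ H_E`. -/
noncomputable def stine {nA nB nE : ℕ} (V : Matrix (Fin nB × Fin nE) (Fin nA) ℂ) :
    Matrix (Fin nB) (Fin nB) ℂ →ₗ[ℂ] Matrix (Fin nA) (Fin nA) ℂ where
  toFun b := Vᴴ * (b ⊗ₖ (1 : Matrix (Fin nE) (Fin nE) ℂ)) * V
  map_add' b c := by simp [Matrix.add_kronecker, Matrix.add_mul, Matrix.mul_add]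
  map_smul' c b := by simp [Matrix.smul_kronecker, Matrix.smul_mul, Matrix.mul_smul]

/-- The complementary channel `T_E(e) = Vᴴ (1_B ⊗ e) V`. -/
noncomputable def stineC {nA nB nE : ℕ} (V : Matrix (Fin nB × Fin nE) (Fin nA) ℂ) :
    Matrix (Fin nE) (Fin nE) ℂ →ₗ[ℂ] Matrix (Fin nA) (Fin nA) ℂ where
  toFun e := Vᴴ * ((1 : Matrix (Fin nB) (Fin nB) ℂ) ⊗ₖ e) * V
  map_add' b c := by simp [Matrix.kronecker_add, Matrix.add_mul, Matrix.mul_add]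
  map_smul' c b := by simp [Matrix.kronecker_smul, Matrix.smul_mul, Matrix.mul_smul]

/-- The Schrödinger (trace-duality) adjoint `Φ_*`, determined by
`tr (Φ_*(ρ) b) = tr (ρ Φ(b))`. -/
noncomputable def dualMap {nB nA : ℕ}
    (Φ : Matrix (Fin nB) (Fin nB) ℂ →ₗ[ℂ] Matrix (Fin nA) (Fin nA) ℂ) :
    Matrix (Fin nA) (Fin nA) ℂ →ₗ[ℂ] Matrix (Fin nB) (Fin nB) ℂ where
  toFun ρ := Matrix.of fun i j => (ρ * Φ (Matrix.single j i 1)).trace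
  map_add' ρ τ := by ext i j; simp [Matrix.add_mul]
  map_smul' c ρ := by ext i j; simp [Matrix.smul_mul]

/-- Outer product `|ψ⟩⟨ψ|`. -/
def outer {n : Type*} (ψ : n → ℂ) : Matrix n n ℂ :=
  Matrix.vecMulVec ψ (star ψ)

/-- Partial trace over the second tensor factor. -/
noncomputable def ptrace2 {a e : Type*} [Fintype e] (M : Matrix (a × e) (a × e) ℂ) : Matrix a a ℂ :=
  Matrix.of fun i j => ∑ k, M (i, k) (j, k)

/-- Partial trace over the first tensor factor. -/
noncomputable def ptrace1 {a e : Type*} [Fintype a] (M : Matrix (a × e) (a × e) ℂ) : Matrix e e ℂ :=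
  Matrix.of fun i j => ∑ k, M (k, i) (k, j)

/-- The Schrödinger picture channel `T_*(ρ) = tr_E (V ρ Vᴴ)`. -/
noncomputable def schrod {nA nB nE : ℕ} (V : Matrix (Fin nB × Fin nE) (Fin nA) ℂ) :
    Matrix (Fin nA) (Fin nA) ℂ →ₗ[ℂ] Matrix (Fin nB) (Fin nB) ℂ where
  toFun ρ := ptrace2 (V * ρ * Vᴴ)
  map_add' ρ τ := by
    ext i j
    simp [ptrace2, Matrix.add_mul, Matrix.mul_add, Finset.sum_add_distrib]
  map_smul' c ρ := by
    ext i j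
    simp [ptrace2, Matrix.smul_mul, Matrix.mul_smul, Finset.mul_sum]

/-- Completely depolarizing channel `S(e) = tr(σ e) 1_A` (Heisenberg picture). -/
noncomputable def depol {nE nA : ℕ} (σ : Matrix (Fin nE) (Fin nE) ℂ) :
    Matrix (Fin nE) (Fin nE) ℂ →ₗ[ℂ] Matrix (Fin nA) (Fin nA) ℂ where
  toFun e := (σ * e).trace • 1
  map_add' e f := by simp [Matrix.mul_add, add_smul]
  map_smul' c e := by simp [Matrix.mul_smul, smul_smul]

/-- The transpose map `Θ(e) = eᵀ`. -/
def transposeMap (ν : ℕ) : Matrix (Fin ν) (Fin ν) ℂ →ₗ[ℂ] Matrix (Fin ν) (Fin ν) ℂ where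
  toFun e := eᵀ
  map_add' := by intros; simp
  map_smul' := by intros; simp

/-- The maximally depolarizing channel `S(e) = (1/ν) tr(e) 1`. -/
noncomputable def depolS (ν : ℕ) :
    Matrix (Fin ν) (Fin ν) ℂ →ₗ[ℂ] Matrix (Fin ν) (Fin ν) ℂ :=
  depol ((ν : ℂ)⁻¹ • (1 : Matrix (Fin ν) (Fin ν) ℂ))

/-- `T_p = (1-p) S + p Θ`. -/
noncomputable def Tp (ν : ℕ) (p : ℝ) :
    Matrix (Fin ν) (Fin ν) ℂ →ₗ[ℂ] Matrix (Fin ν) (Fin ν) ℂ :=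
  (((1 - p : ℝ) : ℂ)) • depolS ν + ((p : ℝ) : ℂ) • transposeMap ν

/-- The flip (swap) operator `F = Σ_{i,j} |i,j⟩⟨j,i|`. -/
def flipOp (ν : ℕ) : Matrix (Fin ν × Fin ν) (Fin ν × Fin ν) ℂ :=
  Matrix.of fun p q => if p.1 = q.2 ∧ p.2 = q.1 then 1 else 0

/-- Amplification on the right factor: `Φ ⊗ id_k`. -/
noncomputable def ampL {nB nA : ℕ} (k : ℕ)
    (Φ : Matrix (Fin nB) (Fin nB) ℂ →ₗ[ℂ] Matrix (Fin nA) (Fin nA) ℂ) :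
    Matrix (Fin nB × Fin k) (Fin nB × Fin k) ℂ →ₗ[ℂ]
      Matrix (Fin nA × Fin k) (Fin nA × Fin k) ℂ where
  toFun X := Matrix.of fun p q => Φ (Matrix.of fun a b => X (a, p.2) (b, q.2)) p.1 q.1
  map_add' X Y := by
    ext p q
    have h : (Matrix.of fun a b => (X + Y) (a, p.2) (b, q.2))
        = (Matrix.of fun a b => X (a, p.2) (b, q.2))
          + Matrix.of fun a b => Y (a, p.2) (b, q.2) := by
      ext a b; simp
    show Φ (Matrix.of fun a b => (X + Y) (a, p.2) (b, q.2)) p.1 q.1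
      = Φ (Matrix.of fun a b => X (a, p.2) (b, q.2)) p.1 q.1
        + Φ (Matrix.of fun a b => Y (a, p.2) (b, q.2)) p.1 q.1
    rw [h, map_add]; rfl
  map_smul' c X := by
    ext p q
    have h : (Matrix.of fun a b => (c • X) (a, p.2) (b, q.2))
        = c • Matrix.of fun a b => X (a, p.2) (b, q.2) := by
      ext a b; simp
    show Φ (Matrix.of fun a b => (c • X) (a, p.2) (b, q.2)) p.1 q.1
      = (c • Φ (Matrix.of fun a b => X (a, p.2) (b, q.2))) p.1 q.1
    rw [h, _root_.map_smul]

/-- Operational fidelity of two channels. -/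
noncomputable def opFid {nA nB : ℕ}
    (T₁ T₂ : Matrix (Fin nB) (Fin nB) ℂ →ₗ[ℂ] Matrix (Fin nA) (Fin nA) ℂ) : ℝ :=
  ⨅ ψ : {ψ : Fin nA × Fin nA → ℂ // ∑ x, ‖ψ x‖ ^ 2 = 1},
    fid (amp nA (dualMap T₁) (outer ψ.1)) (amp nA (dualMap T₂) (outer ψ.1))

/-- Minimality of a Stinespring representation. -/
def Minimal {nA nB nE : ℕ} (V : Matrix (Fin nB × Fin nE) (Fin nA) ℂ) : Prop :=
  Submodule.span ℂ {x : Fin nB × Fin nE → ℂ |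
    ∃ (b : Matrix (Fin nB) (Fin nB) ℂ) (φ : Fin nA → ℂ),
      x = (b ⊗ₖ (1 : Matrix (Fin nE) (Fin nE) ℂ)).mulVec (V.mulVec φ)} = ⊤


section Aux

variable {m n : Type*} [Fintype m] [Fintype n] [DecidableEq m] [DecidableEq n]

noncomputable def _root_.Matrix.PosSemidef.sqrt {A : Matrix n n ℂ} (h : A.PosSemidef) :
    Matrix n n ℂ :=
  (h.1.eigenvectorUnitary : Matrix n n ℂ) * diagonal ((↑) ∘ Real.sqrt ∘ h.1.eigenvalues)
    * (star h.1.eigenvectorUnitary : Matrix n n ℂ)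

section SqrtPort
open scoped MatrixOrder

lemma psd_sqrt_eq_cfc {A : Matrix n n ℂ} (hA : A.PosSemidef) : hA.sqrt = CFC.sqrt A := by
  rw [CFC.sqrt_eq_real_sqrt A (Matrix.nonneg_iff_posSemidef.mpr hA), cfcₙ_eq_cfc,
    hA.1.cfc_eq]
  rfl

lemma _root_.Matrix.PosSemidef.posSemidef_sqrt {A : Matrix n n ℂ} (hA : A.PosSemidef) :
    hA.sqrt.PosSemidef := by
  rw [psd_sqrt_eq_cfc hA, ← Matrix.nonneg_iff_posSemidef]
  exact CFC.sqrt_nonneg A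

lemma _root_.Matrix.PosSemidef.sqrt_mul_self {A : Matrix n n ℂ} (hA : A.PosSemidef) :
    hA.sqrt * hA.sqrt = A := by
  rw [psd_sqrt_eq_cfc hA]
  exact CFC.sqrt_mul_sqrt_self A (Matrix.nonneg_iff_posSemidef.mpr hA)

lemma _root_.Matrix.PosSemidef.eq_sqrt_of_sq_eq {A : Matrix n n ℂ} (hA : A.PosSemidef)
    {B : Matrix n n ℂ} (hB : B.PosSemidef) (hAB : A ^ 2 = B) : A = hB.sqrt := by
  rw [psd_sqrt_eq_cfc hB, ← hAB]
  exact (CFC.sqrt_sq A (Matrix.nonneg_iff_posSemidef.mpr hA)).symm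

end SqrtPort

lemma msqrt_of_psd {A : Matrix n n ℂ} (hA : A.PosSemidef) : msqrt A = hA.sqrt := by
  rw [msqrt, dif_pos hA]
  rfl

lemma trace_msqrt_psd {A : Matrix n n ℂ} (hA : A.PosSemidef) :
    (msqrt A).trace = ((∑ i, Real.sqrt (hA.1.eigenvalues i) : ℝ) : ℂ) := by
  have hdef : hA.sqrt = hA.1.eigenvectorUnitary.1 *
      diagonal ((↑) ∘ Real.sqrt ∘ hA.1.eigenvalues) *
      (star hA.1.eigenvectorUnitary : Matrix n n ℂ) := rfl
  rw [msqrt_of_psd hA, hdef, Matrix.trace_mul_cycle,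
    Matrix.mem_unitaryGroup_iff'.mp hA.1.eigenvectorUnitary.2, one_mul, trace_diagonal]
  push_cast
  rfl

lemma col_eq_zero {C : Matrix m n ℂ} {i : n} (h : (Cᴴ * C) i i = 0) (x : m) : C x i = 0 := by
  have h2 : ∑ x, (Complex.normSq (C x i) : ℂ) = 0 := by
    rw [← h]
    simp [Matrix.mul_apply, Complex.normSq_eq_conj_mul_self]
  have h3 : ∑ x, Complex.normSq (C x i) = 0 := by exact_mod_cast h2
  have h4 := (Finset.sum_eq_zero_iff_of_nonneg
    (fun x _ => Complex.normSq_nonneg (C x i))).mp h3 x (Finset.mem_univ x)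
  exact Complex.normSq_eq_zero.mp h4

variable {m n : Type*} [Fintype m] [Fintype n] [DecidableEq m] [DecidableEq n]

lemma trace_sqrt_comm (B : Matrix m n ℂ) :
    (msqrt (Bᴴ * B)).trace = (msqrt (B * Bᴴ)).trace := by
  have hA : (Bᴴ * B).PosSemidef := posSemidef_conjTranspose_mul_self B
  set lam := hA.1.eigenvalues with hlam
  have hlam0 : ∀ i, 0 ≤ lam i := hA.eigenvalues_nonneg
  set V : Matrix n n ℂ := ↑(hA.1.eigenvectorUnitary) with hV
  have hVV' : V * Vᴴ = 1 := by
    simpa [Matrix.star_eq_conjTranspose] using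
      Matrix.mem_unitaryGroup_iff.mp hA.1.eigenvectorUnitary.2
  have hdiag : Vᴴ * (Bᴴ * B) * V = diagonal (fun i => (lam i : ℂ)) := by
    have h := hA.1.conjStarAlgAut_star_eigenvectorUnitary
    simp [Matrix.star_eq_conjTranspose] at h
    rw [hV, hlam]
    convert h using 1
    rfl
  set C := B * V with hC
  have hCC : Cᴴ * C = diagonal (fun i => (lam i : ℂ)) := by
    rw [← hdiag, hC, Matrix.conjTranspose_mul]
    simp [Matrix.mul_assoc]
  set t : n → ℂ := fun i => ((Real.sqrt (lam i))⁻¹ : ℝ) with ht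
  set Q := C * diagonal t * Cᴴ with hQ
  have hcol : ∀ i, lam i = 0 → ∀ x, C x i = 0 := by
    intro i hi x
    refine col_eq_zero (i := i) ?_ x
    rw [hCC]
    simp [hi]
  have hQpsd : Q.PosSemidef := by
    refine Matrix.PosSemidef.mul_mul_conjTranspose_same ?_ C
    refine Matrix.posSemidef_diagonal_iff.mpr fun i => ?_
    exact Complex.zero_le_real.mpr (by positivity)
  have hQsq : Q ^ 2 = B * Bᴴ := by
    have h1 : Q ^ 2 = C * (diagonal t * ((Cᴴ * C) * (diagonal t * Cᴴ))) := by
      rw [pow_two, hQ]; simp only [Matrix.mul_assoc]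
    have hdd : diagonal t * ((diagonal fun i => (lam i : ℂ)) * diagonal t)
        = diagonal (fun i => t i * (lam i : ℂ) * t i) := by
      rw [Matrix.diagonal_mul_diagonal, Matrix.diagonal_mul_diagonal]
      congr 1
      funext i
      simp [mul_assoc]
    have h1' : Q ^ 2 = C * diagonal (fun i => t i * (lam i : ℂ) * t i) * Cᴴ := by
      rw [h1, hCC, ← Matrix.mul_assoc (diagonal _) (diagonal t) Cᴴ,
        ← Matrix.mul_assoc (diagonal t), hdd]
      simp only [Matrix.mul_assoc]
    rw [h1']
    have h2 : C * diagonal (fun i => t i * (lam i : ℂ) * t i) * Cᴴ = C * Cᴴ := by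
      ext x y
      rw [Matrix.mul_apply, Matrix.mul_apply]
      refine Finset.sum_congr rfl fun i _ => ?_
      rw [Matrix.mul_diagonal]
      by_cases hi : lam i = 0
      · simp [hcol i hi x]
      · have hs : Real.sqrt (lam i) ≠ 0 := by
          simpa using Real.sqrt_ne_zero'.mpr (lt_of_le_of_ne (hlam0 i) (Ne.symm hi))
        have hr : (Real.sqrt (lam i))⁻¹ * lam i * (Real.sqrt (lam i))⁻¹ = 1 := by
          nth_rewrite 2 [← Real.mul_self_sqrt (hlam0 i)]
          field_simp
        have h1c : t i * (lam i : ℂ) * t i = 1 := by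
          simp only [ht]
          exact_mod_cast congrArg (Complex.ofReal) hr
        rw [h1c, mul_one]
    rw [h2, hC, Matrix.conjTranspose_mul, ← Matrix.mul_assoc, Matrix.mul_assoc B, hVV',
      Matrix.mul_one]
  rw [msqrt_of_psd (posSemidef_self_mul_conjTranspose B),
    ← hQpsd.eq_sqrt_of_sq_eq (posSemidef_self_mul_conjTranspose B) hQsq,
    trace_msqrt_psd hA, hQ, Matrix.trace_mul_cycle, hCC,
    Matrix.diagonal_mul_diagonal, Matrix.trace_diagonal]
  simp only [← hlam, ht]
  push_cast
  refine Finset.sum_congr rfl fun i _ => ?_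
  by_cases hi : lam i = 0
  · simp [hi]
  · have hs : Real.sqrt (lam i) ≠ 0 := by
      simpa using Real.sqrt_ne_zero'.mpr (lt_of_le_of_ne (hlam0 i) (Ne.symm hi))
    have hr : Real.sqrt (lam i) = lam i * (Real.sqrt (lam i))⁻¹ := by
      nth_rewrite 2 [← Real.mul_self_sqrt (hlam0 i)]
      field_simp
    exact_mod_cast congrArg (Complex.ofReal) hr

lemma polar (M : Matrix n n ℂ) :
    ∃ W ∈ Matrix.unitaryGroup n ℂ, M = W * msqrt (Mᴴ * M) := by
  have hA : (Mᴴ * M).PosSemidef := posSemidef_conjTranspose_mul_self M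
  set lam := hA.1.eigenvalues with hlam
  have hlam0 : ∀ i, 0 ≤ lam i := hA.eigenvalues_nonneg
  set V : Matrix n n ℂ := ↑(hA.1.eigenvectorUnitary) with hV
  have hVV' : V * Vᴴ = 1 := by
    simpa [Matrix.star_eq_conjTranspose] using
      Matrix.mem_unitaryGroup_iff.mp hA.1.eigenvectorUnitary.2
  have hVV : Vᴴ * V = 1 := by
    simpa [Matrix.star_eq_conjTranspose] using
      Matrix.mem_unitaryGroup_iff'.mp hA.1.eigenvectorUnitary.2
  have hdiag : Vᴴ * (Mᴴ * M) * V = diagonal (fun i => (lam i : ℂ)) := by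
    have h := hA.1.conjStarAlgAut_star_eigenvectorUnitary
    simp [Matrix.star_eq_conjTranspose] at h
    rw [hV, hlam]
    convert h using 1
    rfl
  set C := M * V with hC
  have hCC : Cᴴ * C = diagonal (fun i => (lam i : ℂ)) := by
    rw [← hdiag, hC, Matrix.conjTranspose_mul]
    simp [Matrix.mul_assoc]
  have hcol : ∀ i, lam i = 0 → ∀ x, C x i = 0 := by
    intro i hi x
    refine col_eq_zero (i := i) ?_ x
    rw [hCC]; simp [hi]
  set v : n → EuclideanSpace ℂ n :=
    fun i => WithLp.toLp 2 (fun x => (((Real.sqrt (lam i))⁻¹ : ℝ) : ℂ) * C x i) with hv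
  have hinner : ∀ i j : n, (inner ℂ (v i) (v j) : ℂ)
      = (((Real.sqrt (lam i))⁻¹ : ℝ) : ℂ) * (((Real.sqrt (lam j))⁻¹ : ℝ) : ℂ)
        * (if i = j then (lam i : ℂ) else 0) := by
    intro i j
    have h1 : (inner ℂ (v i) (v j) : ℂ) = ∑ x, (starRingEnd ℂ) (v i x) * v j x := by
      rw [PiLp.inner_apply]
      simp [RCLike.inner_apply, mul_comm]
    rw [h1]
    have h2 : ∑ x, (starRingEnd ℂ) (v i x) * v j x
        = (((Real.sqrt (lam i))⁻¹ : ℝ) : ℂ) * (((Real.sqrt (lam j))⁻¹ : ℝ) : ℂ)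
          * ∑ x, (starRingEnd ℂ) (C x i) * C x j := by
      rw [Finset.mul_sum]
      refine Finset.sum_congr rfl fun x _ => ?_
      simp [hv, _root_.map_mul, Complex.conj_ofReal]
      ring
    rw [h2]
    congr 1
    have h3 : ∑ x, (starRingEnd ℂ) (C x i) * C x j = (Cᴴ * C) i j := by
      simp [Matrix.mul_apply, Matrix.conjTranspose_apply]
    rw [h3, hCC, Matrix.diagonal_apply]
  have hortho : Orthonormal ℂ (Set.restrict {i | lam i ≠ 0} v) := by
    rw [orthonormal_iff_ite]
    intro i j
    change inner ℂ (v i) (v j) = _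
    rw [hinner]
    by_cases hij : (i : n) = (j : n)
    · have : i = j := Subtype.ext hij
      subst this
      simp only [if_pos rfl]
      have hi : lam (i : n) ≠ 0 := i.2
      have hs : Real.sqrt (lam (i : n)) ≠ 0 := by
        simpa using Real.sqrt_ne_zero'.mpr (lt_of_le_of_ne (hlam0 i) (Ne.symm hi))
      have hr : (Real.sqrt (lam (i:n)))⁻¹ * (Real.sqrt (lam (i:n)))⁻¹ * lam (i:n) = 1 := by
        nth_rewrite 3 [← Real.mul_self_sqrt (hlam0 (i:n))]
        field_simp
      simp only [if_true]
      exact_mod_cast congrArg (Complex.ofReal) hr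
    · have : i ≠ j := fun h => hij (congrArg _ h)
      rw [if_neg hij, if_neg this]
      ring
  obtain ⟨b, hb⟩ := hortho.exists_orthonormalBasis_extension_of_card_eq
    (by simp : Module.finrank ℂ (EuclideanSpace ℂ n) = Fintype.card n)
  set W0 : Matrix n n ℂ := Matrix.of fun x i => b i x with hW0
  have hW0U : W0 ∈ Matrix.unitaryGroup n ℂ := by
    rw [Matrix.mem_unitaryGroup_iff']
    ext i j
    have hbo := orthonormal_iff_ite.mp b.orthonormal i j
    have h1 : (inner ℂ (b i) (b j) : ℂ) = ∑ x, (starRingEnd ℂ) (b i x) * b j x := by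
      rw [PiLp.inner_apply]
      simp [RCLike.inner_apply, mul_comm]
    rw [h1] at hbo
    simp only [Matrix.star_eq_conjTranspose, Matrix.mul_apply, Matrix.conjTranspose_apply,
      hW0, Matrix.of_apply, Matrix.one_apply, star]
    rw [← hbo]
    rfl
  have hCW : C = W0 * diagonal (fun i => ((Real.sqrt (lam i) : ℝ) : ℂ)) := by
    ext x i
    rw [Matrix.mul_diagonal]
    by_cases hi : lam i = 0
    · rw [hcol i hi x, hi]
      simp
    · have hbv : b i = v i := hb i hi
      have hW0x : W0 x i = v i x := by rw [hW0, Matrix.of_apply, hbv]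
      rw [hW0x, hv]
      have hs : Real.sqrt (lam i) ≠ 0 := by
        simpa using Real.sqrt_ne_zero'.mpr (lt_of_le_of_ne (hlam0 i) (Ne.symm hi))
      have : (((Real.sqrt (lam i))⁻¹ : ℝ) : ℂ) * ((Real.sqrt (lam i) : ℝ) : ℂ) = 1 := by
        rw [← Complex.ofReal_mul, inv_mul_cancel₀ hs]
        simp
      simp only [WithLp.ofLp_toLp]
      rw [mul_right_comm, this, one_mul]
  have hsqrt : msqrt (Mᴴ * M) = V * diagonal (fun i => ((Real.sqrt (lam i) : ℝ) : ℂ)) * Vᴴ := by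
    rw [msqrt_of_psd hA]
    rfl
  refine ⟨W0 * Vᴴ, ?_, ?_⟩
  · refine mul_mem hW0U ?_
    rw [Matrix.mem_unitaryGroup_iff, Matrix.star_eq_conjTranspose,
      Matrix.conjTranspose_conjTranspose]
    exact hVV
  · rw [hsqrt]
    calc M = M * (V * Vᴴ) := by rw [hVV', Matrix.mul_one]
    _ = C * Vᴴ := by rw [hC, Matrix.mul_assoc]
    _ = W0 * diagonal (fun i => ((Real.sqrt (lam i) : ℝ) : ℂ)) * Vᴴ := by rw [hCW]
    _ = W0 * Vᴴ * (V * diagonal (fun i => ((Real.sqrt (lam i) : ℝ) : ℂ)) * Vᴴ) := by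
      simp only [← Matrix.mul_assoc]
      rw [Matrix.mul_assoc W0 Vᴴ V, hVV, Matrix.mul_one]

lemma sum_conj_mul_eq_trace (A B : Matrix n n ℂ) :
    ∑ p : n × n, (starRingEnd ℂ) (A p.1 p.2) * B p.1 p.2 = (Aᴴ * B).trace := by
  rw [Matrix.trace, Fintype.sum_prod_type, Finset.sum_comm]
  simp [Matrix.mul_apply, Matrix.diag, Matrix.conjTranspose_apply]

lemma trace_msqrt_re_nonneg {A : Matrix n n ℂ} (hA : A.PosSemidef) :
    0 ≤ (msqrt A).trace.re := by
  rw [trace_msqrt_psd hA, Complex.ofReal_re]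
  exact Finset.sum_nonneg fun i _ => Real.sqrt_nonneg _

lemma abs_trace_mul_unitary_le (M : Matrix n n ℂ) {U : Matrix n n ℂ}
    (hU : U ∈ Matrix.unitaryGroup n ℂ) :
    ‖(M * U).trace‖ ≤ (msqrt (Mᴴ * M)).trace.re := by
  obtain ⟨W, hW, hMW⟩ := polar M
  set P := msqrt (Mᴴ * M) with hP
  have hPpsd : P.PosSemidef := by
    rw [hP, msqrt_of_psd (posSemidef_conjTranspose_mul_self M)]
    exact Matrix.PosSemidef.posSemidef_sqrt _
  set R := msqrt P with hR
  have hRpsd : R.PosSemidef := by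
    rw [hR, msqrt_of_psd hPpsd]
    exact Matrix.PosSemidef.posSemidef_sqrt _
  have hRR : R * R = P := by
    rw [hR, msqrt_of_psd hPpsd]
    exact hPpsd.sqrt_mul_self
  set G := U * W with hG
  have hGU : G ∈ Matrix.unitaryGroup n ℂ := mul_mem hU hW
  have hGG : G * Gᴴ = 1 := by
    simpa [Matrix.star_eq_conjTranspose] using Matrix.mem_unitaryGroup_iff.mp hGU
  have h0 : (M * U).trace = (P * G).trace := by
    rw [hMW, Matrix.trace_mul_cycle, Matrix.trace_mul_comm, hG]
  set x : EuclideanSpace ℂ (n × n) := WithLp.toLp 2 (fun p : n × n => R p.1 p.2) with hx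
  set y : EuclideanSpace ℂ (n × n) := WithLp.toLp 2 (fun p : n × n => (R * G) p.1 p.2) with hy
  have hinner : ∀ u w : EuclideanSpace ℂ (n × n),
      (inner ℂ u w : ℂ) = ∑ p : n × n, (starRingEnd ℂ) (u p) * w p := by
    intro u w
    rw [PiLp.inner_apply]
    simp [RCLike.inner_apply, mul_comm]
  have hxy : (inner ℂ x y : ℂ) = (P * G).trace := by
    rw [hinner, hx, hy]
    rw [sum_conj_mul_eq_trace, hRpsd.1.eq, ← Matrix.mul_assoc, hRR]
  have hxx : (inner ℂ x x : ℂ) = P.trace := by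
    rw [hinner, hx, sum_conj_mul_eq_trace, hRpsd.1.eq, hRR]
  have hyy : (inner ℂ y y : ℂ) = P.trace := by
    rw [hinner, hy, sum_conj_mul_eq_trace, Matrix.conjTranspose_mul, hRpsd.1.eq]
    rw [show Gᴴ * R * (R * G) = Gᴴ * (R * R * G) by simp only [Matrix.mul_assoc], hRR,
      ← Matrix.mul_assoc, Matrix.trace_mul_comm, ← Matrix.mul_assoc, hGG, Matrix.one_mul]
  have ht0 : 0 ≤ P.trace.re := trace_msqrt_re_nonneg (posSemidef_conjTranspose_mul_self M)
  have hnx : ‖x‖ ^ 2 = P.trace.re := by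
    have h1 := inner_self_eq_norm_sq_to_K (𝕜 := ℂ) x
    rw [hxx] at h1
    rw [h1]
    norm_cast
  have hny : ‖y‖ ^ 2 = P.trace.re := by
    have h1 := inner_self_eq_norm_sq_to_K (𝕜 := ℂ) y
    rw [hyy] at h1
    rw [h1]
    norm_cast
  have hcs := norm_inner_le_norm (𝕜 := ℂ) x y
  rw [hxy] at hcs
  have hprod : ‖x‖ * ‖y‖ = P.trace.re := by
    have ha : ‖x‖ = Real.sqrt (P.trace.re) := by
      rw [← hnx, Real.sqrt_sq (norm_nonneg x)]
    have hb : ‖y‖ = Real.sqrt (P.trace.re) := by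
      rw [← hny, Real.sqrt_sq (norm_nonneg y)]
    rw [ha, hb, Real.mul_self_sqrt ht0]
  rw [h0]
  rw [hprod] at hcs
  exact hcs


lemma transpose_mem_unitary {U : Matrix n n ℂ} (hU : U ∈ Matrix.unitaryGroup n ℂ) :
    Uᵀ ∈ Matrix.unitaryGroup n ℂ := by
  rw [Matrix.mem_unitaryGroup_iff', Matrix.star_eq_conjTranspose]
  have h := Matrix.mem_unitaryGroup_iff.mp hU
  rw [Matrix.star_eq_conjTranspose] at h
  have h2 : (Uᵀ)ᴴ = (Uᴴ)ᵀ := by ext i j; simp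
  rw [h2, ← Matrix.transpose_mul, h, Matrix.transpose_one]

lemma conjTranspose_mem_unitary {U : Matrix n n ℂ} (hU : U ∈ Matrix.unitaryGroup n ℂ) :
    Uᴴ ∈ Matrix.unitaryGroup n ℂ := by
  rw [Matrix.mem_unitaryGroup_iff, Matrix.star_eq_conjTranspose,
    Matrix.conjTranspose_conjTranspose]
  have h := Matrix.mem_unitaryGroup_iff'.mp hU
  rwa [Matrix.star_eq_conjTranspose] at h

end Aux

theorem uhlmann_rotated {nA nR : ℕ}
    (ρ σ : Matrix (Fin nA) (Fin nA) ℂ) (hρ : ρ.PosSemidef) (hσ : σ.PosSemidef)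
    (hρ1 : ρ.trace = 1) (hσ1 : σ.trace = 1)
    (ψρ ψσ : Fin nA × Fin nR → ℂ)
    (hψρ : ptrace2 (outer ψρ) = ρ) (hψσ : ptrace2 (outer ψσ) = σ) :
    IsGreatest {r : ℝ | ∃ U ∈ Matrix.unitaryGroup (Fin nR) ℂ,
        r = ‖(∑ x, (starRingEnd ℂ) (ψρ x)
          * (((1 : Matrix (Fin nA) (Fin nA) ℂ) ⊗ₖ U).mulVec ψσ) x)‖} (fid ρ σ) := by
  set X : Matrix (Fin nA) (Fin nR) ℂ := Matrix.of fun i k => ψρ (i, k) with hX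
  set Y : Matrix (Fin nA) (Fin nR) ℂ := Matrix.of fun i k => ψσ (i, k) with hY
  have hXX : X * Xᴴ = ρ := by
    rw [← hψρ]
    ext i j
    simp [Matrix.mul_apply, ptrace2, outer, Matrix.vecMulVec_apply, hX]
  have hYY : Y * Yᴴ = σ := by
    rw [← hψσ]
    ext i j
    simp [Matrix.mul_apply, ptrace2, outer, Matrix.vecMulVec_apply, hY]
  set M := Xᴴ * Y with hM
  have hval : ∀ U : Matrix (Fin nR) (Fin nR) ℂ,
      (∑ x, (starRingEnd ℂ) (ψρ x)
        * (((1 : Matrix (Fin nA) (Fin nA) ℂ) ⊗ₖ U).mulVec ψσ) x) = (M * Uᵀ).trace := by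
    intro U
    have lhs_eq : (∑ x, (starRingEnd ℂ) (ψρ x)
        * (((1 : Matrix (Fin nA) (Fin nA) ℂ) ⊗ₖ U).mulVec ψσ) x)
        = ∑ i, ∑ k, ∑ l, (starRingEnd ℂ) (ψρ (i, k)) * (U k l * ψσ (i, l)) := by
      rw [Fintype.sum_prod_type]
      refine Finset.sum_congr rfl fun i _ => ?_
      refine Finset.sum_congr rfl fun k _ => ?_
      have hmv : (((1 : Matrix (Fin nA) (Fin nA) ℂ) ⊗ₖ U).mulVec ψσ) (i, k)
          = ∑ l, U k l * ψσ (i, l) := by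
        simp only [Matrix.mulVec, dotProduct, Fintype.sum_prod_type,
          Matrix.kroneckerMap_apply, Matrix.one_apply, ite_mul, one_mul, zero_mul]
        simp
      rw [hmv, Finset.mul_sum]
    have rhs_eq : (M * Uᵀ).trace
        = ∑ k, ∑ l, (∑ i, (starRingEnd ℂ) (ψρ (i, k)) * ψσ (i, l)) * U k l := by
      rw [Matrix.trace]
      simp only [Matrix.diag_apply, Matrix.mul_apply, Matrix.transpose_apply, hM,
        Matrix.conjTranspose_apply, hX, hY, Matrix.of_apply]
      rfl
    rw [lhs_eq, rhs_eq, Finset.sum_comm]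
    refine Finset.sum_congr rfl fun k _ => ?_
    rw [Finset.sum_comm]
    refine Finset.sum_congr rfl fun l _ => ?_
    rw [Finset.sum_mul]
    refine Finset.sum_congr rfl fun i _ => ?_
    ring
  have hsρH : (msqrt ρ)ᴴ = msqrt ρ := by
    rw [msqrt_of_psd hρ]
    exact hρ.posSemidef_sqrt.1
  have hsρ2 : msqrt ρ * msqrt ρ = ρ := by
    rw [msqrt_of_psd hρ]
    exact hρ.sqrt_mul_self
  have hfid : fid ρ σ = (msqrt (Mᴴ * M)).trace.re := by
    have h1 : msqrt ρ * σ * msqrt ρ = (msqrt ρ * Y) * (msqrt ρ * Y)ᴴ := by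
      rw [Matrix.conjTranspose_mul, hsρH, ← hYY]
      simp only [Matrix.mul_assoc]
    have h2 : (msqrt ρ * Y)ᴴ * (msqrt ρ * Y) = Mᴴ * M := by
      rw [Matrix.conjTranspose_mul, hsρH]
      rw [show Yᴴ * msqrt ρ * (msqrt ρ * Y) = Yᴴ * (msqrt ρ * msqrt ρ) * Y by
        simp only [Matrix.mul_assoc], hsρ2, ← hXX, hM, Matrix.conjTranspose_mul,
        Matrix.conjTranspose_conjTranspose]
      simp only [Matrix.mul_assoc]
    rw [fid, h1, ← trace_sqrt_comm, h2]
  constructor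
  · obtain ⟨W, hW, hMW⟩ := polar M
    set P := msqrt (Mᴴ * M) with hPdef
    have hWW : Wᴴ * W = 1 := by
      have h := Matrix.mem_unitaryGroup_iff'.mp hW
      rwa [Matrix.star_eq_conjTranspose] at h
    refine ⟨(Wᴴ)ᵀ, transpose_mem_unitary (conjTranspose_mem_unitary hW), ?_⟩
    rw [hval, Matrix.transpose_transpose]
    have htr : (M * Wᴴ).trace = P.trace := by
      conv_lhs => rw [hMW]
      rw [Matrix.trace_mul_cycle, hWW, Matrix.one_mul]
    rw [htr, hfid, hPdef, trace_msqrt_psd (posSemidef_conjTranspose_mul_self M)]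
    rw [Complex.ofReal_re, Complex.norm_real, Real.norm_eq_abs,
      abs_of_nonneg (Finset.sum_nonneg fun i _ => Real.sqrt_nonneg _)]
  · rintro r ⟨U, hU, rfl⟩
    rw [hval, hfid]
    exact abs_trace_mul_unitary_le M (transpose_mem_unitary hU)


end QI
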